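/- If w ∈ S_n has the right hull property, then al(u,w) = ℓ′(u·w⁻¹) for all u ≤ w. -/

import Mathlib

open Equiv

/-- The length of a permutation: its number of inversions. -/
def len {n : ℕ} (w : Perm (Fin n)) : ℕ :=
  (Finset.univ.filter (fun p : Fin n × Fin n => p.1 < p.2 ∧ w p.2 < w p.1)).card

/-- Directed edge of the Bruhat graph on `S_n`. -/
def edge {n : ℕ} (x y : Perm (Fin n)) : Prop :=
  (∃ t : Perm (Fin n), t.IsSwap ∧ y = t * x) ∧ len x < len y

/-- The Bruhat order: `u ≤ w` iff `u = w` or there is a directed path from `u` to `w`. -/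
def bruhatLe {n : ℕ} (u w : Perm (Fin n)) : Prop :=
  Relation.ReflTransGen edge u w

/-- `reachesIn r m u w` : there is a directed path with `m` edges from `u` to `w`. -/
def reachesIn {α : Type*} (r : α → α → Prop) : ℕ → α → α → Prop
  | 0, u, w => u = w
  | (m+1), u, w => ∃ v, r u v ∧ reachesIn r m v w

/-- `al u w` : the minimum number of edges of a directed path from `u` to `w`
in the Bruhat graph. -/
noncomputable def al {n : ℕ} (u w : Perm (Fin n)) : ℕ :=
  sInf {m | reachesIn edge m u w}

/-- The absolute length: least `k` such that `v` is a product of `k` transpositions. -/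
noncomputable def absLen {n : ℕ} (v : Perm (Fin n)) : ℕ :=
  sInf {k | ∃ l : List (Perm (Fin n)), l.length = k ∧ (∀ t ∈ l, t.IsSwap) ∧ l.prod = v}

/-- The right hull of `w`: pairs `(i,j)` such that some `a ≤ i` has `w a ≥ j` and
some `b ≥ i` has `w b ≤ j`. -/
def rightHull {n : ℕ} (w : Perm (Fin n)) : Set (Fin n × Fin n) :=
  {p | (∃ a : Fin n, a ≤ p.1 ∧ p.2 ≤ w a) ∧ (∃ b : Fin n, p.1 ≤ b ∧ w b ≤ p.2)}

/-- `w` has the right hull property if `[e,w]` consists exactly of the permutations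
whose diagram is contained in the right hull of `w`. -/
def hasRightHullProperty {n : ℕ} (w : Perm (Fin n)) : Prop :=
  ∀ u : Perm (Fin n), bruhatLe u w ↔ ∀ i : Fin n, (i, u i) ∈ rightHull w

open Finset Equiv.Perm

variable {n : ℕ}

section Aux

theorem len_inv (x : Perm (Fin n)) : len x = len x⁻¹ := by
  classical
  unfold len
  apply Finset.card_bij (fun r _ => ((x r.2 : Fin n), (x r.1 : Fin n)))
  · rintro ⟨i, j⟩ hr
    simp only [mem_filter, mem_univ, true_and] at hr ⊢
    simpa using ⟨hr.2, hr.1⟩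
  · rintro ⟨i, j⟩ hi ⟨i', j'⟩ hj hij
    simp only [Prod.mk.injEq, EmbeddingLike.apply_eq_iff_eq] at hij
    simp [Prod.ext_iff, hij.1, hij.2]
  · rintro ⟨i, j⟩ hr
    simp only [mem_filter, mem_univ, true_and] at hr
    refine ⟨(x⁻¹ j, x⁻¹ i), ?_, ?_⟩
    · simp only [mem_filter, mem_univ, true_and]
      exact ⟨hr.2, by simpa using hr.1⟩
    · simp

theorem len_lt_mul_swap {z : Perm (Fin n)} {p q : Fin n} (hpq : p < q) (hz : z p < z q) :
    len z < len (z * Equiv.swap p q) := by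
  classical
  set y := z * Equiv.swap p q with hy
  have hyp : y p = z q := by simp [hy, Equiv.swap_apply_left]
  have hyq : y q = z p := by simp [hy, Equiv.swap_apply_right]
  have hyo : ∀ i, i ≠ p → i ≠ q → y i = z i := by
    intro i h1 h2; simp [hy, Equiv.swap_apply_of_ne_of_ne h1 h2]
  set Iz := (Finset.univ.filter (fun r : Fin n × Fin n => r.1 < r.2 ∧ z r.2 < z r.1)) with hIz
  set Iy := (Finset.univ.filter (fun r : Fin n × Fin n => r.1 < r.2 ∧ y r.2 < y r.1)) with hIy
  have hpqIy : (p, q) ∈ Iy := by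
    simp only [hIy, mem_filter, mem_univ, true_and]
    exact ⟨hpq, by rw [hyp, hyq]; exact hz⟩
  have key : len z ≤ (Iy.erase (p, q)).card := by
    apply Finset.card_le_card_of_injOn
      (fun r => if r.2 = p ∧ ¬ (z q < z r.1) then (r.1, q)
        else if r.1 = q ∧ ¬ (z r.2 < z p) then (p, r.2) else r)
    · -- maps to
      rintro ⟨i, j⟩ hr
      simp only [Finset.mem_coe, hIz, mem_filter, mem_univ, true_and] at hr
      obtain ⟨hij, hzij⟩ := hr
      dsimp only
      by_cases h1 : j = p ∧ ¬ (z q < z i)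
      · rw [if_pos h1]
        have hip : i < p := h1.1 ▸ hij
        have hzpi : z p < z i := h1.1 ▸ hzij
        have hiq : i < q := lt_trans hip hpq
        refine Finset.mem_erase.mpr ⟨by simp [ne_of_lt hip, Prod.ext_iff], ?_⟩
        simp only [hIy, mem_filter, mem_univ, true_and]
        refine ⟨hiq, ?_⟩
        rw [hyq, hyo i (ne_of_lt hip) (ne_of_lt hiq)]
        exact hzpi
      · rw [if_neg h1]
        by_cases h2 : i = q ∧ ¬ (z j < z p)
        · rw [if_pos h2]
          have hqj : q < j := h2.1 ▸ hij
          have hpj : p < j := lt_trans hpq hqj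
          have hzjq : z j < z q := h2.1 ▸ hzij
          refine Finset.mem_erase.mpr ⟨by simp [ne_of_gt hqj, Prod.ext_iff], ?_⟩
          simp only [hIy, mem_filter, mem_univ, true_and]
          refine ⟨hpj, ?_⟩
          rw [hyp, hyo j (ne_of_gt hpj) (ne_of_gt hqj)]
          exact hzjq
        · rw [if_neg h2]
          refine Finset.mem_erase.mpr ⟨?_, ?_⟩
          · rintro hpq2
            have he1 : i = p := congrArg Prod.fst hpq2
            have he2 : j = q := congrArg Prod.snd hpq2
            rw [he1, he2] at hzij
            exact absurd hz (not_lt.mpr (le_of_lt hzij))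
          simp only [hIy, mem_filter, mem_univ, true_and]
          refine ⟨hij, ?_⟩
          by_cases hip : i = p
          · have hjq : j ≠ q := by
              rintro rfl
              rw [hip] at hzij; exact absurd hz (not_lt.mpr (le_of_lt hzij))
            have hjp : j ≠ p := by rintro rfl; rw [hip] at hij; exact absurd hij (lt_irrefl _)
            rw [hip, hyp, hyo j hjp hjq]
            rw [hip] at hzij
            exact lt_trans hzij hz
          · by_cases hiq : i = q
            · have hzjp : z j < z p := by
                by_contra hcon
                exact h2 ⟨hiq, hcon⟩
              have hjq : j ≠ q := by rintro rfl; rw [hiq] at hij; exact absurd hij (lt_irrefl _)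
              have hjp : j ≠ p := fun hc => absurd (hc ▸ hzjp) (lt_irrefl _)
              rw [hiq, hyq, hyo j hjp hjq]
              exact hzjp
            · by_cases hjp : j = p
              · have hzqi : z q < z i := by
                  by_contra hcon
                  exact h1 ⟨hjp, hcon⟩
                rw [hjp, hyp, hyo i hip hiq]
                exact hzqi
              · by_cases hjq : j = q
                · rw [hjq, hyq, hyo i hip hiq]
                  rw [hjq] at hzij
                  exact lt_trans hz hzij
                · rw [hyo i hip hiq, hyo j hjp hjq]
                  exact hzij
    · -- injective
      rintro ⟨i, j⟩ hr ⟨i', j'⟩ hr' heq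
      simp only [Finset.mem_coe, hIz, mem_filter, mem_univ, true_and] at hr hr'
      obtain ⟨hij, hzij⟩ := hr
      obtain ⟨hij', hzij'⟩ := hr'

      simp only [] at heq
      by_cases h1 : j = p ∧ ¬ (z q < z i) <;> by_cases h1' : j' = p ∧ ¬ (z q < z i')
      · rw [if_pos h1, if_pos h1'] at heq
        rw [Prod.mk.injEq] at heq
        exact Prod.ext heq.1 (h1.1.trans h1'.1.symm)
      · rw [if_pos h1] at heq
        by_cases h2' : i' = q ∧ ¬ (z j' < z p)
        · rw [if_neg h1', if_pos h2'] at heq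
          rw [Prod.mk.injEq] at heq
          exfalso
          have hip : i < p := h1.1 ▸ hij
          rw [heq.1] at hip
          exact absurd hip (lt_irrefl p)
        · rw [if_neg h1', if_neg h2'] at heq
          rw [Prod.mk.injEq] at heq
          exfalso
          -- j' = q, i' = i, inversion (i, q): z q < z i contradicts h1.2
          have hjq : j' = q := heq.2.symm
          rw [hjq, ← heq.1] at hzij'
          exact h1.2 hzij'
      · rw [if_pos h1'] at heq
        by_cases h2 : i = q ∧ ¬ (z j < z p)
        · rw [if_neg h1, if_pos h2] at heq
          rw [Prod.mk.injEq] at heq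
          exfalso
          have hip : i' < p := h1'.1 ▸ hij'
          rw [← heq.1] at hip
          exact absurd hip (lt_irrefl p)
        · rw [if_neg h1, if_neg h2] at heq
          rw [Prod.mk.injEq] at heq
          exfalso
          have hjq : j = q := heq.2
          rw [hjq, heq.1] at hzij
          exact h1'.2 hzij
      · by_cases h2 : i = q ∧ ¬ (z j < z p) <;> by_cases h2' : i' = q ∧ ¬ (z j' < z p)
        · rw [if_neg h1, if_pos h2, if_neg h1', if_pos h2'] at heq
          rw [Prod.mk.injEq] at heq
          exact Prod.ext (h2.1.trans h2'.1.symm) heq.2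
        · rw [if_neg h1, if_pos h2, if_neg h1', if_neg h2'] at heq
          rw [Prod.mk.injEq] at heq
          exfalso
          -- i' = p, j' = j : inversion (p, j): z j < z p contradicts h2.2
          rw [← heq.1, ← heq.2] at hzij'
          exact h2.2 hzij'
        · rw [if_neg h1, if_neg h2, if_neg h1', if_pos h2'] at heq
          rw [Prod.mk.injEq] at heq
          exfalso
          rw [heq.1, heq.2] at hzij
          exact h2'.2 hzij
        · rw [if_neg h1, if_neg h2, if_neg h1', if_neg h2'] at heq
          exact heq
  calc len z ≤ (Iy.erase (p, q)).card := key
    _ < Iy.card := Finset.card_lt_card (Finset.erase_ssubset hpqIy)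

/-- rank function: number of positions `i ≤ i0` with value `x i > j`. -/
def rnk (x : Perm (Fin n)) (i0 j : Fin n) : ℕ :=
  (Finset.univ.filter (fun i => i ≤ i0 ∧ j < x i)).card

theorem inv_lt_inv_of_edge {x : Perm (Fin n)} {c d : Fin n} (hcd : c < d)
    (hlen : len x < len (Equiv.swap c d * x)) : x⁻¹ c < x⁻¹ d := by
  by_contra hcon
  have hne : x⁻¹ d ≠ x⁻¹ c := fun h => (ne_of_lt hcd) (x⁻¹.injective h).symm
  have hlt : x⁻¹ d < x⁻¹ c := lt_of_le_of_ne (not_lt.mp hcon) hne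
  set y := Equiv.swap c d * x with hy
  have hyi : y⁻¹ = x⁻¹ * Equiv.swap c d := by
    rw [hy, mul_inv_rev, Equiv.swap_inv]
  have h1 : y⁻¹ c = x⁻¹ d := by rw [hyi]; simp [Equiv.swap_apply_left]
  have h2 : y⁻¹ d = x⁻¹ c := by rw [hyi]; simp [Equiv.swap_apply_right]
  have := len_lt_mul_swap hcd (by rw [h1, h2]; exact hlt)
  have h3 : y⁻¹ * Equiv.swap c d = x⁻¹ := by
    rw [hyi, mul_assoc]; simp
  rw [h3] at this
  rw [← len_inv, ← len_inv] at this
  exact absurd hlen (not_lt.mpr (le_of_lt this))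

theorem rnk_le_of_swap_edge {x : Perm (Fin n)} {c d : Fin n} (hcd : c < d)
    (hord : x⁻¹ c < x⁻¹ d) (i0 j : Fin n) :
    rnk x i0 j ≤ rnk (Equiv.swap c d * x) i0 j := by
  classical
  set y := Equiv.swap c d * x with hy
  set p0 := x⁻¹ c with hp0
  set q0 := x⁻¹ d with hq0
  have hyp0 : y p0 = d := by rw [hy]; simp [hp0, Equiv.swap_apply_left]
  have hyq0 : y q0 = c := by rw [hy]; simp [hq0, Equiv.swap_apply_right]
  have hyo : ∀ i, i ≠ p0 → i ≠ q0 → y i = x i := by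
    intro i h1 h2
    have hxc : x i ≠ c := fun hc => h1 (by rw [hp0, ← hc]; simp)
    have hxd : x i ≠ d := fun hc => h2 (by rw [hq0, ← hc]; simp)
    rw [hy]; simp [Equiv.swap_apply_of_ne_of_ne hxc hxd]
  unfold rnk
  apply Finset.card_le_card_of_injOn (fun i => if i = q0 ∧ ¬ (j < c) then p0 else i)
  · intro i hi
    simp only [Finset.mem_coe, mem_filter, mem_univ, true_and] at hi
    obtain ⟨hii0, hji⟩ := hi
    dsimp only
    by_cases hc : i = q0 ∧ ¬ (j < c)
    · rw [if_pos hc]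
      simp only [Finset.mem_coe, mem_filter, mem_univ, true_and]
      constructor
      · exact le_trans (le_of_lt hord) (hc.1 ▸ hii0)
      · rw [hyp0]
        have : x i = d := by rw [hc.1, hq0]; simp
        rw [this] at hji; exact hji
    · rw [if_neg hc]
      simp only [Finset.mem_coe, mem_filter, mem_univ, true_and]
      refine ⟨hii0, ?_⟩
      by_cases h1 : i = p0
      · rw [h1, hyp0]
        have : x i = c := by rw [h1, hp0]; simp
        rw [this] at hji
        exact lt_trans hji hcd
      · by_cases h2 : i = q0
        · have hjc : j < c := by
            by_contra hcon; exact hc ⟨h2, hcon⟩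
          rw [h2, hyq0]; exact hjc
        · rw [hyo i h1 h2]; exact hji
  · intro a ha b hb hab
    simp only [Finset.mem_coe, mem_filter, mem_univ, true_and] at ha hb
    simp only [] at hab
    by_cases hca : a = q0 ∧ ¬ (j < c) <;> by_cases hcb : b = q0 ∧ ¬ (j < c)
    · rw [hca.1, hcb.1]
    · rw [if_pos hca, if_neg hcb] at hab
      exfalso
      have : x b = c := by rw [← hab, hp0]; simp
      rw [this] at hb
      exact hca.2 hb.2
    · rw [if_neg hca, if_pos hcb] at hab
      exfalso
      have : x a = c := by rw [hab, hp0]; simp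
      rw [this] at ha
      exact hcb.2 ha.2
    · rw [if_neg hca, if_neg hcb] at hab
      exact hab

theorem rnk_le_of_edge {x y : Perm (Fin n)} (h : edge x y) (i0 j : Fin n) :
    rnk x i0 j ≤ rnk y i0 j := by
  obtain ⟨⟨t, ht, rfl⟩, hlen⟩ := h
  obtain ⟨c, d, hne, rfl⟩ := ht
  rcases lt_or_gt_of_ne hne with hcd | hcd
  · exact rnk_le_of_swap_edge hcd (inv_lt_inv_of_edge hcd hlen) i0 j
  · rw [Equiv.swap_comm] at hlen ⊢
    exact rnk_le_of_swap_edge hcd (inv_lt_inv_of_edge hcd hlen) i0 j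

theorem rnk_mono {u w : Perm (Fin n)} (h : bruhatLe u w) (i0 j : Fin n) :
    rnk u i0 j ≤ rnk w i0 j := by
  induction h with
  | refl => exact le_rfl
  | tail _ he ih => exact le_trans ih (rnk_le_of_edge he i0 j)

/-- Number of cycles (orbits, including fixed points) of a permutation. -/
noncomputable def cyc (v : Perm (Fin n)) : ℕ :=
  Nat.card (Quotient (Equiv.Perm.SameCycle.setoid v))

theorem cyc_one : cyc (1 : Perm (Fin n)) = n := by
  have e : Quotient (Equiv.Perm.SameCycle.setoid (1 : Perm (Fin n))) ≃ Fin n := by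
    refine ⟨Quotient.lift id (fun a b h => Equiv.Perm.sameCycle_one.mp h), Quotient.mk _, ?_, ?_⟩
    · intro q
      induction q using Quotient.ind
      rfl
    · intro i
      rfl
  rw [cyc, Nat.card_congr e, Nat.card_eq_fintype_card, Fintype.card_fin]

theorem cyc_le (v : Perm (Fin n)) : cyc v ≤ n := by
  have hsurj : Function.Surjective (Quotient.mk (Equiv.Perm.SameCycle.setoid v)) := by
    intro q
    induction q using Quotient.ind with
    | _ i => exact ⟨i, rfl⟩
  have := Nat.card_le_card_of_surjective _ hsurj
  rwa [Nat.card_eq_fintype_card (α := Fin n), Fintype.card_fin] at this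

/-- If a setoid relation is closed under applying `y`, it contains `SameCycle y`. -/
theorem sameCycle_subset_of_closed (y : Perm (Fin n)) (R : Setoid (Fin n))
    (h : ∀ i, R.r i (y i)) {i j : Fin n} (hij : y.SameCycle i j) : R.r i j := by
  obtain ⟨k, -, -, hk⟩ := hij.exists_pow_eq''
  subst hk
  clear hij
  induction k with
  | zero => exact R.iseqv.refl i
  | succ m ih =>
    have : (y ^ (m + 1)) i = y ((y ^ m) i) := by
      rw [pow_succ']
      rfl
    rw [this]
    exact R.iseqv.trans ih (h _)

/-- Merge the classes of `a` and `b` in a setoid. -/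
def mrg (R : Setoid (Fin n)) (a b : Fin n) : Setoid (Fin n) := by
  refine ⟨fun i j => R.r i j ∨ (R.r i a ∧ R.r b j) ∨ (R.r i b ∧ R.r a j), ⟨?_, ?_, ?_⟩⟩
  · intro i; exact Or.inl (R.iseqv.refl i)
  · rintro i j (h | ⟨h1, h2⟩ | ⟨h1, h2⟩)
    · exact Or.inl (R.iseqv.symm h)
    · exact Or.inr (Or.inr ⟨R.iseqv.symm h2, R.iseqv.symm h1⟩)
    · exact Or.inr (Or.inl ⟨R.iseqv.symm h2, R.iseqv.symm h1⟩)
  · rintro i j k (h | ⟨h1, h2⟩ | ⟨h1, h2⟩) (h' | ⟨h1', h2'⟩ | ⟨h1', h2'⟩)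
    · exact Or.inl (R.iseqv.trans h h')
    · exact Or.inr (Or.inl ⟨R.iseqv.trans h h1', h2'⟩)
    · exact Or.inr (Or.inr ⟨R.iseqv.trans h h1', h2'⟩)
    · exact Or.inr (Or.inl ⟨h1, R.iseqv.trans h2 h'⟩)
    · exact Or.inl (R.iseqv.trans h1 (R.iseqv.trans (R.iseqv.symm (R.iseqv.trans h2 h1')) h2'))
    · exact Or.inl (R.iseqv.trans h1 h2')
    · exact Or.inr (Or.inr ⟨h1, R.iseqv.trans h2 h'⟩)
    · exact Or.inl (R.iseqv.trans h1 h2')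
    · exact Or.inl (R.iseqv.trans h1 (R.iseqv.trans (R.iseqv.symm (R.iseqv.trans h2 h1')) h2'))

theorem card_quotient_le_of_le {s t : Setoid (Fin n)} (h : ∀ i j, s.r i j → t.r i j) :
    Nat.card (Quotient t) ≤ Nat.card (Quotient s) := by
  have hsurj : Function.Surjective
      (Quotient.lift (fun i => Quotient.mk t i) (fun a b hab => Quotient.sound (h a b hab)) :
        Quotient s → Quotient t) := by
    intro q
    induction q using Quotient.ind with
    | _ i => exact ⟨Quotient.mk s i, rfl⟩
  exact Nat.card_le_card_of_surjective _ hsurj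

theorem card_le_mrg_add_one (R : Setoid (Fin n)) (a b : Fin n) :
    Nat.card (Quotient R) ≤ Nat.card (Quotient (mrg R a b)) + 1 := by
  classical
  have hwd : ∀ (i j : Fin n), R.r i j →
      (if R.r i b then (none : Option (Quotient (mrg R a b))) else some (Quotient.mk _ i)) =
      (if R.r j b then (none : Option (Quotient (mrg R a b))) else some (Quotient.mk _ j)) := by
    intro i j hij
    by_cases hb : R.r i b
    · rw [if_pos hb, if_pos (R.iseqv.trans (R.iseqv.symm hij) hb)]
    · rw [if_neg hb, if_neg (fun hc => hb (R.iseqv.trans hij hc))]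
      exact congrArg some (Quotient.sound (Or.inl hij))
  have hinj : Function.Injective (Quotient.lift _ hwd : Quotient R → Option (Quotient (mrg R a b))) := by
    intro q q'
    induction q using Quotient.ind with
    | _ i =>
    induction q' using Quotient.ind with
    | _ j =>
    intro hq
    simp only [Quotient.lift_mk] at hq
    by_cases hb : R.r i b <;> by_cases hb' : R.r j b
    · exact Quotient.sound (R.iseqv.trans hb (R.iseqv.symm hb'))
    · rw [if_pos hb, if_neg hb'] at hq; exact absurd hq (by simp)
    · rw [if_neg hb, if_pos hb'] at hq; exact absurd hq (by simp)
    · rw [if_neg hb, if_neg hb'] at hq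
      have := Option.some_injective _ hq
      have hmrg := Quotient.exact this
      rcases hmrg with h | ⟨h1, h2⟩ | ⟨h1, h2⟩
      · exact Quotient.sound h
      · exact absurd (R.iseqv.symm h2) hb'
      · exact absurd h1 hb
  have := Nat.card_le_card_of_injective _ hinj
  rwa [Finite.card_option] at this

theorem sameCycle_apply_self (v : Perm (Fin n)) (i : Fin n) : v.SameCycle i (v i) :=
  ⟨1, by simp⟩

theorem not_sameCycle_swap_mul {v : Perm (Fin n)} {a b : Fin n} (hab : a ≠ b)
    (hs : v.SameCycle a b) : ¬ (Equiv.swap a b * v).SameCycle a b := by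
  classical
  obtain ⟨k0, hk00, -, hk0b⟩ := hs.exists_pow_eq''
  have hex : ∃ m, 0 < m ∧ (v ^ m) a = b := ⟨k0, hk00, hk0b⟩
  set m := Nat.find hex with hm
  obtain ⟨hm0, hmb⟩ := Nat.find_spec hex
  set y := Equiv.swap a b * v with hy
  have hmin : ∀ j, 0 < j → j < m → (v ^ j) a ≠ b := fun j hj0 hjm hc =>
    Nat.find_min hex hjm ⟨hj0, hc⟩
  have key : ∀ k : ℕ, (y ^ k) a = (v ^ (k % m)) a := by
    intro k
    induction k with
    | zero => simp
    | succ k ih =>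
      have h1 : (y ^ (k + 1)) a = y ((y ^ k) a) := by rw [pow_succ']; rfl
      have h2 : (v ^ (k % m + 1)) a = v ((v ^ (k % m)) a) := by rw [pow_succ']; rfl
      rw [h1, ih]
      have hyapp : y ((v ^ (k % m)) a) = Equiv.swap a b (v ((v ^ (k % m)) a)) := by
        rw [hy]; rfl
      rw [hyapp, ← h2]
      by_cases hc : k % m + 1 = m
      · rw [hc, hmb, Equiv.swap_apply_right]
        have hdvd : (k + 1) % m = 0 := by
          have hdm := Nat.div_add_mod k m
          have hmm : m * (k / m + 1) = m * (k / m) + m := by ring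
          have : k + 1 = m * (k / m + 1) := by omega
          rw [this, Nat.mul_mod_right]
        rw [hdvd, pow_zero]
        rfl
      · have hlt : k % m < m := Nat.mod_lt _ hm0
        have hlt2 : k % m + 1 < m := by omega
        have hne_b : (v ^ (k % m + 1)) a ≠ b := hmin _ (Nat.succ_pos _) hlt2
        have hne_a : (v ^ (k % m + 1)) a ≠ a := by
          intro hcon
          have hsplit : (v ^ (m - (k % m + 1))) ((v ^ (k % m + 1)) a) = (v ^ m) a := by
            rw [← Equiv.Perm.mul_apply, ← pow_add, Nat.sub_add_cancel (le_of_lt hlt2)]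
          rw [hcon, hmb] at hsplit
          exact hmin (m - (k % m + 1)) (by omega) (by omega) hsplit
        rw [Equiv.swap_apply_of_ne_of_ne hne_a hne_b]
        have hmod : (k + 1) % m = k % m + 1 := by
          have h1m : 1 % m = 1 := Nat.mod_eq_of_lt (by omega)
          rw [Nat.add_mod, h1m, Nat.mod_eq_of_lt hlt2]
        rw [hmod]
  intro hsc
  obtain ⟨k', -, -, hk'⟩ := hsc.exists_pow_eq''
  rw [key k'] at hk'
  rcases Nat.eq_zero_or_pos (k' % m) with h0 | hpos
  · rw [h0, pow_zero] at hk'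
    exact hab hk'
  · exact hmin _ hpos (Nat.mod_lt _ hm0) hk'

theorem mrg_closed_under (v : Perm (Fin n)) (a b : Fin n) (i : Fin n) :
    (mrg (Equiv.Perm.SameCycle.setoid v) a b).r i ((Equiv.swap a b * v) i) := by
  have happ : (Equiv.swap a b * v) i = Equiv.swap a b (v i) := rfl
  by_cases h1 : v i = a
  · rw [happ, h1, Equiv.swap_apply_left]
    exact Or.inr (Or.inl ⟨h1 ▸ sameCycle_apply_self v i, Equiv.Perm.SameCycle.refl v b⟩)
  · by_cases h2 : v i = b
    · rw [happ, h2, Equiv.swap_apply_right]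
      exact Or.inr (Or.inr ⟨h2 ▸ sameCycle_apply_self v i, Equiv.Perm.SameCycle.refl v a⟩)
    · rw [happ, Equiv.swap_apply_of_ne_of_ne h1 h2]
      exact Or.inl (sameCycle_apply_self v i)

theorem cyc_le_swap_mul_add_one (v : Perm (Fin n)) (a b : Fin n) :
    cyc v ≤ cyc (Equiv.swap a b * v) + 1 := by
  have step2 : Nat.card (Quotient (mrg (Equiv.Perm.SameCycle.setoid v) a b)) ≤
      cyc (Equiv.swap a b * v) :=
    card_quotient_le_of_le (fun i j hij =>
      sameCycle_subset_of_closed _ _ (mrg_closed_under v a b) hij)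
  calc cyc v ≤ Nat.card (Quotient (mrg (Equiv.Perm.SameCycle.setoid v) a b)) + 1 :=
        card_le_mrg_add_one _ a b
    _ ≤ cyc (Equiv.swap a b * v) + 1 := by omega

theorem cyc_swap_mul_of_sameCycle {v : Perm (Fin n)} {a b : Fin n} (hab : a ≠ b)
    (hs : v.SameCycle a b) : cyc (Equiv.swap a b * v) = cyc v + 1 := by
  classical
  set y := Equiv.swap a b * v with hy
  have hyv : ∀ i j : Fin n, y.SameCycle i j → v.SameCycle i j := by
    intro i j hij
    refine sameCycle_subset_of_closed y (Equiv.Perm.SameCycle.setoid v) ?_ hij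
    intro i
    have happ : y i = Equiv.swap a b (v i) := rfl
    by_cases h1 : v i = a
    · rw [happ, h1, Equiv.swap_apply_left]
      exact Equiv.Perm.SameCycle.trans (h1 ▸ sameCycle_apply_self v i) hs
    · by_cases h2 : v i = b
      · rw [happ, h2, Equiv.swap_apply_right]
        exact Equiv.Perm.SameCycle.trans (h2 ▸ sameCycle_apply_self v i) hs.symm
      · rw [happ, Equiv.swap_apply_of_ne_of_ne h1 h2]
        exact sameCycle_apply_self v i
  have hns : ¬ y.SameCycle a b := not_sameCycle_swap_mul hab hs
  -- upper bound
  have hub : cyc y ≤ cyc v + 1 := by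
    have := cyc_le_swap_mul_add_one y a b
    have hyy : Equiv.swap a b * y = v := by
      rw [hy, ← mul_assoc, Equiv.swap_mul_self, one_mul]
    rwa [hyy] at this
  -- lower bound via surjection
  have hwd : ∀ (i j : Fin n), y.SameCycle i j →
      (if y.SameCycle i b then (none : Option (Quotient (Equiv.Perm.SameCycle.setoid v)))
        else some (Quotient.mk _ i)) =
      (if y.SameCycle j b then (none : Option (Quotient (Equiv.Perm.SameCycle.setoid v)))
        else some (Quotient.mk _ j)) := by
    intro i j hij
    by_cases hb : y.SameCycle i b
    · rw [if_pos hb, if_pos (hij.symm.trans hb)]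
    · rw [if_neg hb, if_neg (fun hc => hb (hij.trans hc))]
      exact congrArg some (Quotient.sound (hyv i j hij))
  have hsurj : Function.Surjective
      (Quotient.lift _ hwd : Quotient (Equiv.Perm.SameCycle.setoid y) →
        Option (Quotient (Equiv.Perm.SameCycle.setoid v))) := by
    intro o
    rcases o with - | q
    · exact ⟨Quotient.mk _ b, by simp [Equiv.Perm.SameCycle.refl]⟩
    · induction q using Quotient.ind with
      | _ i =>
        by_cases hib : y.SameCycle i b
        · refine ⟨Quotient.mk _ a, ?_⟩
          have : ¬ y.SameCycle a b := hns
          simp only [Quotient.lift_mk, if_neg this]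
          exact congrArg some (Quotient.sound (hs.trans (hyv i b hib).symm))
        · exact ⟨Quotient.mk _ i, by simp [hib]⟩
  have := Nat.card_le_card_of_surjective _ hsurj
  rw [Finite.card_option] at this
  have hlb : cyc v + 1 ≤ cyc y := this
  omega

theorem absLen_exists_aux : ∀ (k : ℕ) (v : Perm (Fin n)), n - cyc v = k →
    ∃ l : List (Perm (Fin n)), (∀ t ∈ l, t.IsSwap) ∧ l.prod = v ∧ l.length + cyc v = n := by
  intro k
  induction k using Nat.strong_induction_on with
  | _ k ih =>
    intro v hk
    by_cases hv : v = 1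
    · subst hv
      exact ⟨[], by simp, by simp, by rw [cyc_one]; simp⟩
    · have ha : ∃ a, v a ≠ a := by
        by_contra hcon
        push_neg at hcon
        exact hv (Equiv.ext fun a => by rw [hcon a]; rfl)
      obtain ⟨a, hva⟩ := ha
      have hab : a ≠ v a := Ne.symm hva
      have hs : v.SameCycle a (v a) := sameCycle_apply_self v a
      set y := Equiv.swap a (v a) * v with hy
      have hcy : cyc y = cyc v + 1 := cyc_swap_mul_of_sameCycle hab hs
      have hcyn : cyc y ≤ n := cyc_le y
      have hklt : n - cyc y < k := by omega
      obtain ⟨ly, hsw, hprod, hlen⟩ := ih (n - cyc y) hklt y rfl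
      refine ⟨Equiv.swap a (v a) :: ly, ?_, ?_, ?_⟩
      · intro t ht
        rcases List.mem_cons.mp ht with h | h
        · exact h ▸ ⟨a, v a, hab, rfl⟩
        · exact hsw t h
      · rw [List.prod_cons, hprod, hy, ← mul_assoc, Equiv.swap_mul_self, one_mul]
      · simp only [List.length_cons]
        omega

theorem absLen_ge_aux : ∀ l : List (Perm (Fin n)), (∀ t ∈ l, t.IsSwap) →
    n ≤ l.length + cyc l.prod := by
  intro l
  induction l with
  | nil => intro _; rw [List.prod_nil, cyc_one]; simp
  | cons t l' ih =>
    intro hsw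
    have ht : t.IsSwap := hsw t List.mem_cons_self
    obtain ⟨c, d, hcd, rfl⟩ := ht
    have h1 : cyc l'.prod ≤ cyc (Equiv.swap c d * l'.prod) + 1 := cyc_le_swap_mul_add_one _ c d
    have h2 := ih (fun t ht => hsw t (List.mem_cons_of_mem _ ht))
    rw [List.prod_cons]
    simp only [List.length_cons]
    omega

theorem absLen_eq (v : Perm (Fin n)) : absLen v = n - cyc v := by
  have hmem : (n - cyc v) ∈ {k | ∃ l : List (Perm (Fin n)), l.length = k ∧
      (∀ t ∈ l, t.IsSwap) ∧ l.prod = v} := by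
    obtain ⟨l, hsw, hprod, hlen⟩ := absLen_exists_aux (n - cyc v) v rfl
    exact ⟨l, by omega, hsw, hprod⟩
  refine le_antisymm (Nat.sInf_le hmem) (le_csInf ⟨_, hmem⟩ ?_)
  rintro k ⟨l, hlen, hsw, hprod⟩
  have := absLen_ge_aux l hsw
  rw [hprod] at this
  omega

theorem absLen_swap_mul {v : Perm (Fin n)} {a b : Fin n} (hab : a ≠ b)
    (hs : v.SameCycle a b) : absLen (Equiv.swap a b * v) + 1 = absLen v := by
  have h1 := cyc_swap_mul_of_sameCycle hab hs
  have h2 := cyc_le (Equiv.swap a b * v)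
  rw [absLen_eq, absLen_eq, h1]
  omega

theorem absLen_eq_zero_iff {v : Perm (Fin n)} : absLen v = 0 ↔ v = 1 := by
  constructor
  · intro h
    have hne : {k | ∃ l : List (Perm (Fin n)), l.length = k ∧
        (∀ t ∈ l, t.IsSwap) ∧ l.prod = v}.Nonempty := by
      obtain ⟨l, hsw, hprod, hlen⟩ := absLen_exists_aux (n - cyc v) v rfl
      exact ⟨l.length, l, rfl, hsw, hprod⟩
    have := Nat.sInf_mem hne
    rw [show sInf {k | ∃ l : List (Perm (Fin n)), l.length = k ∧
        (∀ t ∈ l, t.IsSwap) ∧ l.prod = v} = absLen v from rfl, h] at this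
    obtain ⟨l, hlen, -, hprod⟩ := this
    rw [List.length_eq_zero_iff] at hlen
    rw [hlen, List.prod_nil] at hprod
    exact hprod.symm
  · rintro rfl
    have : (0 : ℕ) ∈ {k | ∃ l : List (Perm (Fin n)), l.length = k ∧
        (∀ t ∈ l, t.IsSwap) ∧ l.prod = (1 : Perm (Fin n))} := ⟨[], rfl, by simp, by simp⟩
    exact Nat.le_zero.mp (Nat.sInf_le this)

theorem absLen_inv (v : Perm (Fin n)) : absLen v⁻¹ = absLen v := by
  have hset : Equiv.Perm.SameCycle.setoid v⁻¹ = Equiv.Perm.SameCycle.setoid v :=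
    Setoid.ext fun a b => Equiv.Perm.sameCycle_inv
  have hcyc : cyc v⁻¹ = cyc v := by unfold cyc; rw [hset]
  rw [absLen_eq, absLen_eq, hcyc]

theorem absLen_swap_mul_le (x : Perm (Fin n)) (c d : Fin n) :
    absLen (Equiv.swap c d * x) ≤ absLen x + 1 := by
  have h1 := cyc_le_swap_mul_add_one x c d
  have h2 := cyc_le x
  have h3 := cyc_le (Equiv.swap c d * x)
  rw [absLen_eq, absLen_eq]
  omega

theorem card_filter_le_pos (i0 : Fin n) :
    (Finset.univ.filter fun i : Fin n => i ≤ i0).card = (i0 : ℕ) + 1 := by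
  have : (Finset.univ.filter fun i : Fin n => i ≤ i0) = Finset.Iic i0 := by
    ext i; simp
  rw [this, Fin.card_Iic]

theorem card_filter_apply_le (x : Perm (Fin n)) (c : Fin n) :
    (Finset.univ.filter fun i => x i ≤ c).card = (c : ℕ) + 1 := by
  classical
  have hb : (Finset.univ.filter fun i => x i ≤ c).card =
      (Finset.univ.filter fun v : Fin n => v ≤ c).card := by
    apply Finset.card_bij (fun i _ => x i)
    · intro i hi
      simp only [mem_filter, mem_univ, true_and] at hi ⊢
      exact hi
    · intro i _ j _ hij
      exact x.injective hij
    · intro v hv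
      simp only [mem_filter, mem_univ, true_and] at hv
      exact ⟨x⁻¹ v, by simp [hv], by simp⟩
  rw [hb, card_filter_le_pos c]

theorem card_tri (x : Perm (Fin n)) (i0 a b : Fin n) (hab : a ≤ b) :
    (Finset.univ.filter fun i => i ≤ i0 ∧ x i ≤ a).card
    + (Finset.univ.filter fun i => i ≤ i0 ∧ a < x i ∧ x i ≤ b).card
    + (Finset.univ.filter fun i => i ≤ i0 ∧ b < x i).card = (i0 : ℕ) + 1 := by
  classical
  set s0 := Finset.univ.filter (fun i : Fin n => i ≤ i0) with hs0
  have h1 := Finset.card_filter_add_card_filter_not (s := s0)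
    (p := fun i => x i ≤ a)
  have h2 := Finset.card_filter_add_card_filter_not
    (s := s0.filter (fun i => ¬ x i ≤ a)) (p := fun i => x i ≤ b)
  have e0 : s0.card = (i0 : ℕ) + 1 := card_filter_le_pos i0
  have eA : (s0.filter fun i => x i ≤ a)
      = Finset.univ.filter (fun i => i ≤ i0 ∧ x i ≤ a) := by
    rw [hs0, Finset.filter_filter]
  have eB : ((s0.filter (fun i => ¬ x i ≤ a)).filter fun i => x i ≤ b)
      = Finset.univ.filter (fun i => i ≤ i0 ∧ a < x i ∧ x i ≤ b) := by
    rw [hs0, Finset.filter_filter, Finset.filter_filter]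
    apply Finset.filter_congr
    intro i _
    constructor
    · rintro ⟨hh1, hh2, hh3⟩; exact ⟨hh1, not_le.mp hh2, hh3⟩
    · rintro ⟨hh1, hh2, hh3⟩; exact ⟨hh1, not_le.mpr hh2, hh3⟩
  have eC : ((s0.filter (fun i => ¬ x i ≤ a)).filter fun i => ¬ x i ≤ b)
      = Finset.univ.filter (fun i => i ≤ i0 ∧ b < x i) := by
    rw [hs0, Finset.filter_filter, Finset.filter_filter]
    apply Finset.filter_congr
    intro i _
    constructor
    · rintro ⟨hh1, _, hh3⟩; exact ⟨hh1, not_le.mp hh3⟩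
    · rintro ⟨hh1, hh2⟩; exact ⟨hh1, not_le.mpr (lt_of_le_of_lt hab hh2), not_le.mpr hh2⟩
  rw [eA] at h1
  rw [eB, eC] at h2
  omega

theorem step_exists {w u : Perm (Fin n)} (h : hasRightHullProperty w)
    (hu : bruhatLe u w) (hne : u ≠ w) :
    ∃ p q : Fin n, p < q ∧ u p < u q ∧ (w⁻¹ * u).SameCycle p q ∧
      (∀ i, (i, (u * Equiv.swap p q) i) ∈ rightHull w) := by
  classical
  set z := w⁻¹ * u with hz
  have hzi : ∀ i, z i = w⁻¹ (u i) := fun i => rfl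
  -- disagreement set
  have hD : (Finset.univ.filter fun i => u i ≠ w i).Nonempty := by
    by_contra hcon
    rw [Finset.not_nonempty_iff_eq_empty, Finset.filter_eq_empty_iff] at hcon
    exact hne (Equiv.ext fun i => not_ne_iff.mp (hcon (Finset.mem_univ i)))
  set p := (Finset.univ.filter fun i => u i ≠ w i).min' hD with hp
  have hpmem : u p ≠ w p := by
    have := Finset.min'_mem _ hD
    rw [← hp] at this
    exact (Finset.mem_filter.mp this).2
  have hpmin : ∀ i, u i ≠ w i → p ≤ i := by
    intro i hi
    exact Finset.min'_le _ i (Finset.mem_filter.mpr ⟨Finset.mem_univ i, hi⟩)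
  have hagree : ∀ i, i < p → u i = w i := by
    intro i hip
    by_contra hc
    exact absurd (hpmin i hc) (not_le.mpr hip)
  have hhu : ∀ i, (i, u i) ∈ rightHull w := (h u).mp hu
  have hr : ∀ i0 j, rnk u i0 j ≤ rnk w i0 j := rnk_mono hu
  -- Step A : u p < w p
  have hup_wp : u p < w p := by
    rcases lt_trichotomy (u p) (w p) with h1 | h1 | h1
    · exact h1
    · exact absurd h1 hpmem
    · exfalso
      have hkey := hr p (w p)
      unfold rnk at hkey
      have hsub : (Finset.univ.filter fun i => i ≤ p ∧ w p < w i) ⊆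
          (Finset.univ.filter fun i => i ≤ p ∧ w p < u i).erase p := by
        intro i hi
        simp only [mem_filter, mem_univ, true_and] at hi
        have hip : i ≠ p := fun hc => absurd (hc ▸ hi.2) (lt_irrefl _)
        have hiltp : i < p := lt_of_le_of_ne hi.1 hip
        refine Finset.mem_erase.mpr ⟨hip, ?_⟩
        simp only [mem_filter, mem_univ, true_and]
        exact ⟨hi.1, (hagree i hiltp) ▸ hi.2⟩
      have hpA : p ∈ (Finset.univ.filter fun i => i ≤ p ∧ w p < u i) := by
        simp only [mem_filter, mem_univ, true_and]
        exact ⟨le_rfl, h1⟩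
      have hc1 := Finset.card_le_card hsub
      rw [Finset.card_erase_of_mem hpA] at hc1
      have hpos : 0 < (Finset.univ.filter fun i => i ≤ p ∧ w p < u i).card :=
        Finset.card_pos.mpr ⟨p, hpA⟩
      omega
  -- β : max position with small w-value
  have hSβ : (Finset.univ.filter fun b => w b ≤ u p).Nonempty :=
    ⟨w⁻¹ (u p), by simp⟩
  set β := (Finset.univ.filter fun b => w b ≤ u p).max' hSβ with hβ
  have hβmem : w β ≤ u p := by
    have := Finset.max'_mem _ hSβ
    rw [← hβ] at this
    exact (Finset.mem_filter.mp this).2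
  have hβmax : ∀ b, w b ≤ u p → b ≤ β := by
    intro b hb
    have hmem : b ∈ (Finset.univ.filter fun b' => w b' ≤ u p) :=
      Finset.mem_filter.mpr ⟨Finset.mem_univ b, hb⟩
    rw [hβ]
    exact Finset.le_max' _ b hmem
  -- all small u-values are at positions ≤ β
  have hsmall : ∀ i, u i ≤ u p → i ≤ β := by
    have htri_u := card_tri u β (u p) (u p) le_rfl
    have htri_w := card_tri w β (u p) (u p) le_rfl
    have hmid : ∀ x : Perm (Fin n),
        (Finset.univ.filter fun i => i ≤ β ∧ u p < x i ∧ x i ≤ u p).card = 0 := by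
      intro x
      rw [Finset.card_eq_zero, Finset.filter_eq_empty_iff]
      rintro i - ⟨-, h1, h2⟩
      exact absurd (lt_of_lt_of_le h1 h2) (lt_irrefl _)
    rw [hmid u] at htri_u
    rw [hmid w] at htri_w
    have hSw : (Finset.univ.filter fun i => i ≤ β ∧ w i ≤ u p)
        = (Finset.univ.filter fun i => w i ≤ u p) := by
      apply Finset.filter_congr
      intro i _
      exact ⟨fun hx => hx.2, fun hx => ⟨hβmax i hx, hx⟩⟩
    rw [hSw, card_filter_apply_le] at htri_w
    have hranks := hr β (u p)
    unfold rnk at hranks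
    -- so card S_u ≥ u p + 1
    have hSu_ge : (u p : ℕ) + 1 ≤ (Finset.univ.filter fun i => i ≤ β ∧ u i ≤ u p).card := by
      omega
    have hSu_sub : (Finset.univ.filter fun i => i ≤ β ∧ u i ≤ u p) ⊆
        (Finset.univ.filter fun i => u i ≤ u p) := by
      intro i hi
      simp only [mem_filter, mem_univ, true_and] at hi ⊢
      exact hi.2
    have hSu_card : (Finset.univ.filter fun i => u i ≤ u p).card = (u p : ℕ) + 1 :=
      card_filter_apply_le u (u p)
    have heq : (Finset.univ.filter fun i => i ≤ β ∧ u i ≤ u p)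
        = (Finset.univ.filter fun i => u i ≤ u p) :=
      Finset.eq_of_subset_of_card_le hSu_sub (by omega)
    intro i hi
    have : i ∈ (Finset.univ.filter fun i => i ≤ β ∧ u i ≤ u p) := by
      rw [heq]
      simp only [mem_filter, mem_univ, true_and]
      exact hi
    simp only [mem_filter, mem_univ, true_and] at this
    exact this.1
  have hpβ : p ≤ β := hsmall p le_rfl
  -- The GOAL: find q in the cycle of p, q ≤ β, u p < u q ≤ w p
  have hGOAL : ∃ q, z.SameCycle p q ∧ q ≤ β ∧ u p < u q ∧ u q ≤ w p := by
    by_contra hcon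
    push_neg at hcon
    -- resolve the cycle of p : ṽ = u on the cycle, w elsewhere
    set vt := w * z.cycleOf p with hvt
    have hvt1 : ∀ i, z.SameCycle p i → vt i = u i := by
      intro i hi
      have : z.cycleOf p i = z i := hi.cycleOf_apply
      rw [hvt, Equiv.Perm.mul_apply, this, hzi]
      simp
    have hvt2 : ∀ i, ¬ z.SameCycle p i → vt i = w i := by
      intro i hi
      have : z.cycleOf p i = i := Equiv.Perm.cycleOf_apply_of_not_sameCycle hi
      rw [hvt, Equiv.Perm.mul_apply, this]
    have hvthull : ∀ i, (i, vt i) ∈ rightHull w := by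
      intro i
      by_cases hi : z.SameCycle p i
      · rw [hvt1 i hi]; exact hhu i
      · rw [hvt2 i hi]
        exact ⟨⟨i, le_rfl, le_rfl⟩, ⟨i, le_rfl, le_rfl⟩⟩
    have hvtle : bruhatLe vt w := (h vt).mpr hvthull
    have hrv := rnk_mono hvtle β (w p)
    unfold rnk at hrv
    -- triple splits
    have htri_v := card_tri vt β (u p) (w p) (le_of_lt hup_wp)
    have htri_w := card_tri w β (u p) (w p) (le_of_lt hup_wp)
    -- small-value counts are both u p + 1
    have hSv : (Finset.univ.filter fun i => i ≤ β ∧ vt i ≤ u p)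
        = (Finset.univ.filter fun i => vt i ≤ u p) := by
      apply Finset.filter_congr
      intro i _
      refine ⟨fun hx => hx.2, fun hx => ⟨?_, hx⟩⟩
      by_cases hi : z.SameCycle p i
      · exact hsmall i (hvt1 i hi ▸ hx)
      · exact hβmax i (hvt2 i hi ▸ hx)
    have hSw : (Finset.univ.filter fun i => i ≤ β ∧ w i ≤ u p)
        = (Finset.univ.filter fun i => w i ≤ u p) := by
      apply Finset.filter_congr
      intro i _
      exact ⟨fun hx => hx.2, fun hx => ⟨hβmax i hx, hx⟩⟩
    rw [hSv, card_filter_apply_le] at htri_v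
    rw [hSw, card_filter_apply_le] at htri_w
    -- middle counts : M_v ⊆ M_w.erase p
    have hMsub : (Finset.univ.filter fun i => i ≤ β ∧ u p < vt i ∧ vt i ≤ w p) ⊆
        (Finset.univ.filter fun i => i ≤ β ∧ u p < w i ∧ w i ≤ w p).erase p := by
      intro i hi
      simp only [mem_filter, mem_univ, true_and] at hi
      obtain ⟨hiβ, h1, h2⟩ := hi
      have hnsc : ¬ z.SameCycle p i := by
        intro hsc
        rw [hvt1 i hsc] at h1 h2
        exact absurd h2 (not_le.mpr (hcon i hsc hiβ h1))
      have hip : i ≠ p := fun hc => hnsc (hc ▸ Equiv.Perm.SameCycle.refl z p)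
      rw [hvt2 i hnsc] at h1 h2
      exact Finset.mem_erase.mpr ⟨hip, by
        simp only [mem_filter, mem_univ, true_and]
        exact ⟨hiβ, h1, h2⟩⟩
    have hpM : p ∈ (Finset.univ.filter fun i => i ≤ β ∧ u p < w i ∧ w i ≤ w p) := by
      simp only [mem_filter, mem_univ, true_and]
      exact ⟨hpβ, hup_wp, le_rfl⟩
    have hMcard := Finset.card_le_card hMsub
    rw [Finset.card_erase_of_mem hpM] at hMcard
    have hMpos : 0 < (Finset.univ.filter fun i => i ≤ β ∧ u p < w i ∧ w i ≤ w p).card :=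
      Finset.card_pos.mpr ⟨p, hpM⟩
    omega
  obtain ⟨q, hsc, hqβ, hupq, hqwp⟩ := hGOAL
  have hqnep : q ≠ p := fun hc => absurd (hc ▸ hupq) (lt_irrefl _)
  have hzq : z q ≠ q := by
    intro hfix
    exact hqnep (hsc.eq_of_right hfix).symm
  have hdisq : u q ≠ w q := by
    intro hc
    apply hzq
    rw [hzi, hc]
    simp
  have hpq : p < q := lt_of_le_of_ne (hpmin q hdisq) (Ne.symm hqnep)
  refine ⟨p, q, hpq, hupq, hsc, ?_⟩
  have hv1 : (u * Equiv.swap p q) p = u q := by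
    rw [Equiv.Perm.mul_apply, Equiv.swap_apply_left]
  have hv2 : (u * Equiv.swap p q) q = u p := by
    rw [Equiv.Perm.mul_apply, Equiv.swap_apply_right]
  intro i
  by_cases hip : i = p
  · rw [hip, hv1]
    exact ⟨⟨p, le_rfl, hqwp⟩, ⟨β, hpβ, le_trans hβmem (le_of_lt hupq)⟩⟩
  · by_cases hiq : i = q
    · rw [hiq, hv2]
      exact ⟨⟨p, le_of_lt hpq, le_of_lt hup_wp⟩, ⟨β, hqβ, hβmem⟩⟩
    · have hv3 : (u * Equiv.swap p q) i = u i := by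
        rw [Equiv.Perm.mul_apply, Equiv.swap_apply_of_ne_of_ne hip hiq]
      rw [hv3]
      exact hhu i

theorem reach_of_absLen {w : Perm (Fin n)} (h : hasRightHullProperty w) :
    ∀ k, ∀ u : Perm (Fin n), bruhatLe u w → absLen (u * w⁻¹) = k → reachesIn edge k u w := by
  intro k
  induction k using Nat.strong_induction_on with
  | _ k ih =>
    intro u hu hk
    by_cases hne : u = w
    · subst hne
      have h1 : u * u⁻¹ = (1 : Perm (Fin n)) := mul_inv_cancel u
      rw [h1, absLen_eq_zero_iff.mpr rfl] at hk
      subst hk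
      rfl
    · obtain ⟨p, q, hpq, hupq, hsc, hhull⟩ := step_exists h hu hne
      set u' := u * Equiv.swap p q with hu'
      have hmul : u' = Equiv.swap (u p) (u q) * u := by
        rw [hu', Equiv.swap_apply_apply, mul_assoc]
        simp
      have hupuq : u p ≠ u q := fun hc => (ne_of_lt hupq) hc
      have hedge : edge u u' := by
        refine ⟨⟨Equiv.swap (u p) (u q), ⟨u p, u q, hupuq, rfl⟩, hmul⟩, ?_⟩
        rw [hu']
        exact len_lt_mul_swap hpq hupq
      have hble : bruhatLe u' w := (h u').mpr hhull
      have hconj : u * w⁻¹ = u * (w⁻¹ * u) * u⁻¹ := by group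
      have hsc2 : (u * w⁻¹).SameCycle (u p) (u q) := by
        rw [hconj]
        exact hsc.conj
      have habs : absLen (u' * w⁻¹) + 1 = absLen (u * w⁻¹) := by
        have he : u' * w⁻¹ = Equiv.swap (u p) (u q) * (u * w⁻¹) := by
          rw [hmul, mul_assoc]
        rw [he]
        exact absLen_swap_mul hupuq hsc2
      have hk0 : k ≠ 0 := by
        intro hzero
        rw [hzero] at hk
        exact hne (mul_inv_eq_one.mp (absLen_eq_zero_iff.mp hk))
      obtain ⟨k', rfl⟩ := Nat.exists_eq_succ_of_ne_zero hk0
      have habs' : absLen (u' * w⁻¹) = k' := by omega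
      have hreach := ih k' (Nat.lt_succ_self k') u' hble habs'
      exact ⟨u', hedge, hreach⟩

theorem absLen_le_of_reach {w : Perm (Fin n)} :
    ∀ m, ∀ u : Perm (Fin n), reachesIn edge m u w → absLen (u * w⁻¹) ≤ m := by
  intro m
  induction m with
  | zero =>
    intro u hr
    have : u = w := hr
    subst this
    rw [mul_inv_cancel u, absLen_eq_zero_iff.mpr rfl]
  | succ m ihm =>
    rintro u ⟨v, he, hrest⟩
    have hv := ihm v hrest
    obtain ⟨⟨t, ht, hveq⟩, -⟩ := he
    obtain ⟨c, d, hcd, rfl⟩ := ht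
    have hueq : u * w⁻¹ = Equiv.swap c d * (v * w⁻¹) := by
      rw [hveq, ← mul_assoc, ← mul_assoc, Equiv.swap_mul_self, one_mul]
    rw [hueq]
    calc absLen (Equiv.swap c d * (v * w⁻¹)) ≤ absLen (v * w⁻¹) + 1 := absLen_swap_mul_le _ c d
      _ ≤ m + 1 := by omega


end Aux

/-- If `w ∈ S_n` has the right hull property, then
`al(u,w) = ℓ′(u w⁻¹)` for all `u ≤ w`. -/
theorem al_eq_absLen_of_rightHullProperty {n : ℕ} (w : Perm (Fin n))
    (h : hasRightHullProperty w) :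
    ∀ u : Perm (Fin n), bruhatLe u w → al u w = absLen (u * w⁻¹) := by
  intro u hu
  have hreach : absLen (u * w⁻¹) ∈ {m | reachesIn edge m u w} :=
    reach_of_absLen h _ u hu rfl
  refine le_antisymm (Nat.sInf_le hreach) (le_csInf ⟨_, hreach⟩ ?_)
  intro m hm
  exact absLen_le_of_reach m u hm
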